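/- arXiv:2404.09792 — 6 statements merged into one kernel-verified Lean document; each statement's English description precedes it below -/
import Mathlib

section
/- Let κ ∈ ℝ and let g : (0, T) → ℝ be differentiable with g'(t) + g(t)² + κ ≤ 0 for all t, and suppose g(t) → +∞ as t → 0⁺. Then g(t) ≤ ct_κ(t) for all t ∈ (0, T) in the domain of ct_κ, where ct_κ = cs_κ / sn_κ is the model cotangent function (ct_κ(t) = cot(t) for κ = 1, 1/t for κ = 0, coth(t) for κ = -1, suitably rescaled in general). -/
/-- The model sine function `sn_κ`: solution of `y'' + κ y = 0`, `y 0 = 0`, `y' 0 = 1`. -/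
noncomputable def snK (κ t : ℝ) : ℝ :=
  if 0 < κ then Real.sin (Real.sqrt κ * t) / Real.sqrt κ
  else if κ < 0 then Real.sinh (Real.sqrt (-κ) * t) / Real.sqrt (-κ)
  else t

/-- The model cosine function `cs_κ`: solution of `y'' + κ y = 0`, `y 0 = 1`, `y' 0 = 0`. -/
noncomputable def csK (κ t : ℝ) : ℝ :=
  if 0 < κ then Real.cos (Real.sqrt κ * t)
  else if κ < 0 then Real.cosh (Real.sqrt (-κ) * t)
  else 1

/-- The model cotangent `ct_κ = cs_κ / sn_κ`. -/
noncomputable def ctK (κ t : ℝ) : ℝ := csK κ t / snK κ t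

lemma snK_hasDerivAt (κ t : ℝ) : HasDerivAt (snK κ) (csK κ t) t := by
  unfold snK csK
  rcases lt_trichotomy 0 κ with h | h | h
  · simp only [if_pos h]
    have hs : (0:ℝ) < Real.sqrt κ := Real.sqrt_pos.mpr h
    have hm : HasDerivAt (fun y : ℝ => Real.sqrt κ * y) (Real.sqrt κ) t := by
      simpa using (hasDerivAt_id t).const_mul (Real.sqrt κ)
    have h1 := ((Real.hasDerivAt_sin (Real.sqrt κ * t)).comp t hm).div_const (Real.sqrt κ)
    simpa [Function.comp, mul_div_assoc, div_self hs.ne'] using h1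
  · simp only [← h, lt_irrefl, if_neg (lt_irrefl (0:ℝ))]
    simpa using hasDerivAt_id' t
  · simp only [if_neg (not_lt.mpr h.le), if_pos h]
    have hs : (0:ℝ) < Real.sqrt (-κ) := Real.sqrt_pos.mpr (by linarith)
    have hm : HasDerivAt (fun y : ℝ => Real.sqrt (-κ) * y) (Real.sqrt (-κ)) t := by
      simpa using (hasDerivAt_id t).const_mul (Real.sqrt (-κ))
    have h1 := ((Real.hasDerivAt_sinh (Real.sqrt (-κ) * t)).comp t hm).div_const (Real.sqrt (-κ))
    simpa [Function.comp, mul_div_assoc, div_self hs.ne'] using h1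

lemma csK_hasDerivAt (κ t : ℝ) : HasDerivAt (csK κ) (-κ * snK κ t) t := by
  unfold snK csK
  rcases lt_trichotomy 0 κ with h | h | h
  · simp only [if_pos h]
    have hs : (0:ℝ) < Real.sqrt κ := Real.sqrt_pos.mpr h
    have hm : HasDerivAt (fun y : ℝ => Real.sqrt κ * y) (Real.sqrt κ) t := by
      simpa using (hasDerivAt_id t).const_mul (Real.sqrt κ)
    have h1 := (Real.hasDerivAt_cos (Real.sqrt κ * t)).comp t hm
    have hk : Real.sqrt κ * Real.sqrt κ = κ := Real.mul_self_sqrt h.le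
    have he : -κ * (Real.sin (Real.sqrt κ * t) / Real.sqrt κ)
        = -Real.sin (Real.sqrt κ * t) * Real.sqrt κ := by
      field_simp
      rw [Real.sq_sqrt h.le]
    rw [he]
    simpa [Function.comp_def] using h1
  · simp only [← h, lt_irrefl, if_neg (lt_irrefl (0:ℝ))]
    simpa using hasDerivAt_const t (1:ℝ)
  · simp only [if_neg (not_lt.mpr h.le), if_pos h]
    have hs : (0:ℝ) < Real.sqrt (-κ) := Real.sqrt_pos.mpr (by linarith)
    have hm : HasDerivAt (fun y : ℝ => Real.sqrt (-κ) * y) (Real.sqrt (-κ)) t := by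
      simpa using (hasDerivAt_id t).const_mul (Real.sqrt (-κ))
    have h1 := (Real.hasDerivAt_cosh (Real.sqrt (-κ) * t)).comp t hm
    have hk : Real.sqrt (-κ) * Real.sqrt (-κ) = -κ := Real.mul_self_sqrt (by linarith)
    have he : -κ * (Real.sinh (Real.sqrt (-κ) * t) / Real.sqrt (-κ))
        = Real.sinh (Real.sqrt (-κ) * t) * Real.sqrt (-κ) := by
      field_simp
      rw [Real.sq_sqrt (by linarith)]; ring
    rw [he]
    simpa [Function.comp_def] using h1

lemma snK_zero (κ : ℝ) : snK κ 0 = 0 := by unfold snK; split_ifs <;> simp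
lemma csK_zero (κ : ℝ) : csK κ 0 = 1 := by unfold csK; split_ifs <;> simp

open Filter Set Topology

/-- If `g` satisfies the Riccati inequality `g' + g² + κ ≤ 0` on `(0, T)` and blows up to
`+∞` as `t → 0⁺`, then `g(t) ≤ ct_κ(t)` on the domain of `ct_κ`. -/
theorem riccati_blowup_le_ctK (κ T : ℝ) (g g' : ℝ → ℝ)
    (hderiv : ∀ t ∈ Set.Ioo (0:ℝ) T, HasDerivAt g (g' t) t)
    (hineq : ∀ t ∈ Set.Ioo (0:ℝ) T, g' t + (g t) ^ 2 + κ ≤ 0)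
    (hblow : Filter.Tendsto g (nhdsWithin 0 (Set.Ioi 0)) Filter.atTop) :
    ∀ t ∈ Set.Ioo (0:ℝ) T, 0 < snK κ t → g t ≤ ctK κ t := by
  intro t ht hsnt
  have hT : 0 < T := lt_trans ht.1 ht.2
  -- sn s / s → 1 as s → 0⁺
  have hslope : Tendsto (fun s => snK κ s / s) (𝓝[>] (0:ℝ)) (𝓝 1) := by
    have h0 := hasDerivAt_iff_tendsto_slope.mp (snK_hasDerivAt κ 0)
    rw [csK_zero] at h0
    have h1 : Tendsto (fun s => snK κ s / s) (𝓝[≠] (0:ℝ)) (𝓝 1) := by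
      refine h0.congr' ?_
      filter_upwards [self_mem_nhdsWithin] with s hs
      simp [slope_def_field, snK_zero]
    exact h1.mono_left (nhdsWithin_mono _ (fun x hx => ne_of_gt hx))
  -- sn s → 0, cs s → 1 as s → 0⁺
  have hsn0 : Tendsto (fun s => snK κ s) (𝓝[>] (0:ℝ)) (𝓝 0) := by
    have := (snK_hasDerivAt κ 0).continuousAt.tendsto
    rw [snK_zero] at this
    exact this.mono_left nhdsWithin_le_nhds
  have hcs0 : Tendsto (fun s => csK κ s) (𝓝[>] (0:ℝ)) (𝓝 1) := by
    have := (csK_hasDerivAt κ 0).continuousAt.tendsto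
    rw [csK_zero] at this
    exact this.mono_left nhdsWithin_le_nhds
  -- bound g s ≤ 2/s for small s
  set M : ℝ := 2 * |κ| + 2 with hM
  have hM1 : (1:ℝ) ≤ M := by have := abs_nonneg κ; linarith
  have hge : ∀ᶠ s in 𝓝[>] (0:ℝ), M ≤ g s := hblow.eventually (eventually_ge_atTop M)
  obtain ⟨ε₀, hε₀pos, hε₀⟩ := mem_nhdsGT_iff_exists_Ioo_subset.mp hge
  set ε : ℝ := min ε₀ T with hε
  have hεpos : 0 < ε := lt_min hε₀pos hT
  have hεT : ε ≤ T := min_le_right _ _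
  have hsub : ∀ s ∈ Ioo (0:ℝ) ε, s ∈ Ioo (0:ℝ) T ∧ M ≤ g s := by
    intro s hs
    exact ⟨⟨hs.1, lt_of_lt_of_le hs.2 hεT⟩, hε₀ ⟨hs.1, lt_of_lt_of_le hs.2 (min_le_left _ _)⟩⟩
  set v : ℝ → ℝ := fun x => (g x)⁻¹ - x / 2 with hv
  have hvmono : MonotoneOn v (Ioo (0:ℝ) ε) := by
    have hd : ∀ x ∈ Ioo (0:ℝ) ε, HasDerivAt v (-g' x / g x ^ 2 - 1/2) x := by
      intro x hx
      obtain ⟨hxT, hMx⟩ := hsub x hx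
      have hgx : (0:ℝ) < g x := lt_of_lt_of_le (by positivity) hMx
      exact ((hderiv x hxT).inv hgx.ne').sub ((hasDerivAt_id x).div_const 2)
    refine monotoneOn_of_deriv_nonneg (convex_Ioo 0 ε)
      (fun x hx => (hd x hx).continuousAt.continuousWithinAt) ?_ ?_
    · rw [interior_Ioo]
      exact fun x hx => (hd x hx).differentiableAt.differentiableWithinAt
    · rw [interior_Ioo]
      intro x hx
      rw [(hd x hx).deriv]
      obtain ⟨hxT, hMx⟩ := hsub x hx
      have h1 := hineq x hxT
      have hgx : 0 < g x := lt_of_lt_of_le (by positivity) hMx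
      have hM2 : 2 * |κ| ≤ M ^ 2 := by nlinarith [abs_nonneg κ]
      have hκ : -κ ≤ M ^ 2 / 2 := by
        have := neg_abs_le κ; nlinarith
      have hgM : M ^ 2 ≤ g x ^ 2 := by nlinarith
      rw [sub_nonneg, le_div_iff₀ (by positivity)]
      nlinarith
  have huv : Tendsto v (𝓝[>] (0:ℝ)) (𝓝 0) := by
    have h1 : Tendsto (fun x => (g x)⁻¹) (𝓝[>] (0:ℝ)) (𝓝 0) := hblow.inv_tendsto_atTop
    have h2 : Tendsto (fun x : ℝ => x / 2) (𝓝[>] (0:ℝ)) (𝓝 0) := by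
      have h3 : Tendsto (fun x : ℝ => x / 2) (𝓝 (0:ℝ)) (𝓝 (0/2)) :=
        (continuous_id.div_const (2:ℝ)).tendsto 0
      simpa using h3.mono_left nhdsWithin_le_nhds
    simpa using h1.sub h2
  have hgbound : ∀ τ ∈ Ioo (0:ℝ) ε, g τ ≤ 2 / τ := by
    intro τ hτ
    have hvτ : 0 ≤ v τ := by
      refine le_of_tendsto huv ?_
      filter_upwards [Ioo_mem_nhdsGT_of_mem ⟨le_refl (0:ℝ), hτ.1⟩] with s hs
      exact hvmono ⟨hs.1, lt_trans hs.2 hτ.2⟩ hτ (le_of_lt hs.2)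
    have hgτ : 0 < g τ := lt_of_lt_of_le (by positivity) (hsub τ hτ).2
    have h2 : τ / 2 ≤ (g τ)⁻¹ := by simpa [hv, sub_nonneg] using hvτ
    have h3 := inv_anti₀ (by linarith [hτ.1] : (0:ℝ) < τ/2) h2
    rw [inv_inv] at h3
    simpa [inv_div] using h3
  -- w = g·sn² − sn·cs is antitone on (0,T)
  set w : ℝ → ℝ := fun x => g x * snK κ x ^ 2 - snK κ x * csK κ x with hwdef
  have hwd : ∀ x ∈ Ioo (0:ℝ) T, HasDerivAt w
      (g' x * snK κ x ^ 2 + g x * ((2:ℕ) * snK κ x ^ 1 * csK κ x)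
        - (csK κ x * csK κ x + snK κ x * (-κ * snK κ x))) x := by
    intro x hx
    have hs := snK_hasDerivAt κ x
    have hc := csK_hasDerivAt κ x
    exact ((hderiv x hx).mul (hs.pow 2)).sub (hs.mul hc)
  have hwanti : AntitoneOn w (Ioo (0:ℝ) T) := by
    refine antitoneOn_of_deriv_nonpos (convex_Ioo 0 T)
      (fun x hx => (hwd x hx).continuousAt.continuousWithinAt) ?_ ?_
    · rw [interior_Ioo]
      exact fun x hx => (hwd x hx).differentiableAt.differentiableWithinAt
    · rw [interior_Ioo]
      intro x hx
      rw [(hwd x hx).deriv]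
      have h1 := hineq x hx
      push_cast [pow_one]
      nlinarith [sq_nonneg (g x * snK κ x - csK κ x),
        mul_nonpos_of_nonpos_of_nonneg h1 (sq_nonneg (snK κ x))]
  -- bounding function near zero
  set B : ℝ → ℝ := fun s => 2 * (snK κ s / s) * snK κ s + snK κ s * |csK κ s| with hBdef
  have hBlim : Tendsto B (𝓝[>] (0:ℝ)) (𝓝 0) := by
    have h1 := ((hslope.const_mul 2).mul hsn0).add (hsn0.mul hcs0.abs)
    simpa using h1
  have hwt0 : w t ≤ 0 := by
    refine ge_of_tendsto hBlim ?_
    have hev1 : ∀ᶠ s in 𝓝[>] (0:ℝ), 0 < snK κ s := by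
      filter_upwards [hslope.eventually (eventually_gt_nhds (by norm_num : (1:ℝ)/2 < 1)),
        self_mem_nhdsWithin] with s h1 h2
      have hs0 : (0:ℝ) < s := h2
      have he : snK κ s = (snK κ s / s) * s := (div_mul_cancel₀ _ hs0.ne').symm
      rw [he]
      exact mul_pos (lt_trans (by norm_num) h1) hs0
    filter_upwards [hev1, Ioo_mem_nhdsGT_of_mem ⟨le_refl (0:ℝ), lt_min ht.1 hεpos⟩]
      with s hsns hs
    obtain ⟨hs0, hslt⟩ := hs
    have hsε : s ∈ Ioo (0:ℝ) ε := ⟨hs0, lt_of_lt_of_le hslt (min_le_right _ _)⟩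
    have hsT : s ∈ Ioo (0:ℝ) T := (hsub s hsε).1
    have hst : s ≤ t := le_of_lt (lt_of_lt_of_le hslt (min_le_left _ _))
    have h1 : w t ≤ w s := hwanti hsT ht hst
    have h2 : g s ≤ 2 / s := hgbound s hsε
    have h3 : w s ≤ B s := by
      have hBs : B s = (2/s) * snK κ s ^ 2 + snK κ s * |csK κ s| := by
        rw [hBdef]
        field_simp
      rw [hBs, hwdef]
      have hb1 := mul_le_mul_of_nonneg_right h2 (sq_nonneg (snK κ s))
      have hb2 : (0:ℝ) ≤ snK κ s * (|csK κ s| + csK κ s) :=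
        mul_nonneg hsns.le (by linarith [neg_abs_le (csK κ s)])
      nlinarith [hb1, hb2]
    exact le_trans h1 h3
  have hwt0' : g t * snK κ t ^ 2 - snK κ t * csK κ t ≤ 0 := hwt0
  unfold ctK
  rw [le_div_iff₀ hsnt]
  nlinarith [hwt0', hsnt]
end

section
/- Let f : [x, y] → ℝ be continuous and satisfy f'' + κ f < λ in the classical sense (f is twice differentiable) with κ < 0. Let f̄ : [x, y] → ℝ satisfy f̄'' + κ f̄ = λ with f̄(x) = f(x) and f̄(y) = f(y). Then f ≥ f̄ on [x, y]. -/
/-- Jensen-type comparison for `κ < 0`: if `f'' + κ f < λ` on `[x, y]` and `f̄` solves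
`f̄'' + κ f̄ = λ` with the same boundary values, then `f ≥ f̄` on `[x, y]`. -/
theorem jensen_comparison_neg (κ lam x y : ℝ) (hκ : κ < 0) (hxy : x < y)
    (f f' f'' fb fb' fb'' : ℝ → ℝ)
    (hf1 : ∀ t ∈ Set.Icc x y, HasDerivWithinAt f (f' t) (Set.Icc x y) t)
    (hf2 : ∀ t ∈ Set.Icc x y, HasDerivWithinAt f' (f'' t) (Set.Icc x y) t)
    (hfineq : ∀ t ∈ Set.Icc x y, f'' t + κ * f t < lam)
    (hb1 : ∀ t ∈ Set.Icc x y, HasDerivWithinAt fb (fb' t) (Set.Icc x y) t)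
    (hb2 : ∀ t ∈ Set.Icc x y, HasDerivWithinAt fb' (fb'' t) (Set.Icc x y) t)
    (hbeq : ∀ t ∈ Set.Icc x y, fb'' t + κ * fb t = lam)
    (hbx : fb x = f x) (hby : fb y = f y) :
    ∀ t ∈ Set.Icc x y, fb t ≤ f t := by
  set g : ℝ → ℝ := fun t => fb t - f t with hgdef
  set g' : ℝ → ℝ := fun t => fb' t - f' t with hg'def
  have hgd : ∀ t ∈ Set.Icc x y, HasDerivWithinAt g (g' t) (Set.Icc x y) t :=
    fun t ht => (hb1 t ht).sub (hf1 t ht)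
  have hgd2 : ∀ t ∈ Set.Icc x y,
      HasDerivWithinAt g' (fb'' t - f'' t) (Set.Icc x y) t :=
    fun t ht => (hb2 t ht).sub (hf2 t ht)
  have hgpos : ∀ t ∈ Set.Icc x y, 0 < (fb'' t - f'' t) + κ * g t := by
    intro t ht
    have h1 := hfineq t ht
    have h2 := hbeq t ht
    simp only [hgdef]
    nlinarith
  have hc : ContinuousOn g (Set.Icc x y) := fun t ht => (hgd t ht).continuousWithinAt
  obtain ⟨t0, ht0, hmax⟩ := isCompact_Icc.exists_isMaxOn
    (Set.nonempty_Icc.2 hxy.le) hc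
  suffices h : g t0 ≤ 0 by
    intro t ht
    have := hmax ht
    simp only [hgdef, Set.mem_setOf_eq] at this h ⊢
    linarith
  by_contra hpos
  push_neg at hpos
  have hgx : g x = 0 := by simp [hgdef, hbx]
  have hgy : g y = 0 := by simp [hgdef, hby]
  have hx0 : t0 ≠ x := by intro h; rw [h, hgx] at hpos; linarith
  have hy0 : t0 ≠ y := by intro h; rw [h, hgy] at hpos; linarith
  have ht0o : t0 ∈ Set.Ioo x y :=
    ⟨lt_of_le_of_ne ht0.1 (Ne.symm hx0), lt_of_le_of_ne ht0.2 hy0⟩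
  have hnhds : Set.Icc x y ∈ nhds t0 := Icc_mem_nhds ht0o.1 ht0o.2
  -- first derivative vanishes at the interior max
  have hg'0 : g' t0 = 0 := by
    have hda : HasDerivAt g (g' t0) t0 := (hgd t0 ht0).hasDerivAt hnhds
    exact (hmax.isLocalMax hnhds).hasDerivAt_eq_zero hda
  -- the second derivative is ≤ 0 at t0
  have hda2 : HasDerivAt g' (fb'' t0 - f'' t0) t0 := (hgd2 t0 ht0).hasDerivAt hnhds
  -- sequence b n = t0 + (y - t0)/(n+1)
  set b : ℕ → ℝ := fun n => t0 + (y - t0) * (1 / (n + 1)) with hbdef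
  have hyt : 0 < y - t0 := by linarith [ht0o.2]
  have hbgt : ∀ n : ℕ, t0 < b n := by
    intro n
    have : (0 : ℝ) < 1 / (n + 1) := by positivity
    simp only [hbdef]
    nlinarith
  have hble : ∀ n : ℕ, b n ≤ y := by
    intro n
    have h1 : (1 : ℝ) / (n + 1) ≤ 1 := by
      rw [div_le_one (by positivity)]
      linarith [Nat.cast_nonneg (α := ℝ) n]
    simp only [hbdef]
    nlinarith
  -- MVT: pick c n ∈ (t0, b n) with g' (c n) equal to the slope ≤ 0
  have hmvt : ∀ n : ℕ, ∃ c ∈ Set.Ioo t0 (b n), g' c = (g (b n) - g t0) / (b n - t0) := by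
    intro n
    have hsub : Set.Icc t0 (b n) ⊆ Set.Icc x y :=
      Set.Icc_subset_Icc ht0.1 (hble n)
    apply exists_hasDerivAt_eq_slope g g' (hbgt n) (hc.mono hsub)
    intro c hc'
    have hcm : c ∈ Set.Icc x y := hsub ⟨hc'.1.le, hc'.2.le⟩
    exact (hgd c hcm).hasDerivAt
      (Icc_mem_nhds (ht0o.1.trans hc'.1) (hc'.2.trans_le (hble n)))
  choose c hcmem hcval using hmvt
  have hcpos : ∀ n, t0 < c n := fun n => (hcmem n).1
  have hcy : ∀ n, c n ≤ y := fun n => ((hcmem n).2.le.trans (hble n))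
  have hslope_nonpos : ∀ n, g' (c n) / (c n - t0) ≤ 0 := by
    intro n
    have hbmem : b n ∈ Set.Icc x y := ⟨ht0.1.trans (hbgt n).le, hble n⟩
    have hle : g (b n) ≤ g t0 := hmax hbmem
    have hnum : g' (c n) ≤ 0 := by
      rw [hcval n]
      apply div_nonpos_of_nonpos_of_nonneg (by linarith) (by linarith [hbgt n])
    exact div_nonpos_of_nonpos_of_nonneg hnum (by linarith [hcpos n])
  -- c n → t0
  have hbtend : Filter.Tendsto b Filter.atTop (nhds t0) := by
    have h1 : Filter.Tendsto (fun n : ℕ => (1 : ℝ) / (n + 1)) Filter.atTop (nhds 0) :=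
      tendsto_one_div_add_atTop_nhds_zero_nat
    have := (h1.const_mul (y - t0)).const_add t0
    simpa [hbdef, mul_comm] using this
  have hctend : Filter.Tendsto c Filter.atTop (nhds t0) := by
    apply tendsto_of_tendsto_of_tendsto_of_le_of_le tendsto_const_nhds hbtend
    · exact fun n => (hcpos n).le
    · exact fun n => (hcmem n).2.le
  have hctend' : Filter.Tendsto c Filter.atTop (nhdsWithin t0 {t0}ᶜ) := by
    rw [tendsto_nhdsWithin_iff]
    exact ⟨hctend, Filter.Eventually.of_forall fun n => (hcpos n).ne'⟩
  -- slope tendsto second derivative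
  have hslopetend : Filter.Tendsto (fun n => g' (c n) / (c n - t0)) Filter.atTop
      (nhds (fb'' t0 - f'' t0)) := by
    have h := (hasDerivAt_iff_tendsto_slope.mp hda2).comp hctend'
    have heq : (fun n => slope g' t0 (c n)) = fun n => g' (c n) / (c n - t0) := by
      funext n
      rw [slope_def_field, hg'0]
      rw [sub_zero]
    rw [← heq]
    exact h
  have hd2le : fb'' t0 - f'' t0 ≤ 0 :=
    le_of_tendsto hslopetend (Filter.Eventually.of_forall hslope_nonpos)
  have := hgpos t0 ht0
  nlinarith
end

section
/- Let f : [x, y] → ℝ be twice differentiable with f''(t) + f(t) < λ for all t, where y - x < π. Let f̄ solve f̄'' + f̄ = λ with f̄(x) = f(x), f̄(y) = f(y). Then f ≥ f̄ on [x, y]. (Jensen's inequality for the case κ = 1 via the sin-trick.) -/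
/-- Jensen-type comparison for `κ = 1` (sin-trick): if `f'' + f < λ` on `[x, y]` with
`y - x < π`, and `f̄` solves `f̄'' + f̄ = λ` with the same boundary values, then
`f ≥ f̄` on `[x, y]`. -/
theorem jensen_comparison_one (lam x y : ℝ) (hxy : x < y) (hlen : y - x < Real.pi)
    (f f' f'' fb fb' fb'' : ℝ → ℝ)
    (hf1 : ∀ t ∈ Set.Icc x y, HasDerivWithinAt f (f' t) (Set.Icc x y) t)
    (hf2 : ∀ t ∈ Set.Icc x y, HasDerivWithinAt f' (f'' t) (Set.Icc x y) t)
    (hfineq : ∀ t ∈ Set.Icc x y, f'' t + f t < lam)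
    (hb1 : ∀ t ∈ Set.Icc x y, HasDerivWithinAt fb (fb' t) (Set.Icc x y) t)
    (hb2 : ∀ t ∈ Set.Icc x y, HasDerivWithinAt fb' (fb'' t) (Set.Icc x y) t)
    (hbeq : ∀ t ∈ Set.Icc x y, fb'' t + fb t = lam)
    (hbx : fb x = f x) (hby : fb y = f y) :
    ∀ t ∈ Set.Icc x y, fb t ≤ f t := by
  by_contra hcon
  push_neg at hcon
  obtain ⟨t₁, ht₁, hg1⟩ := hcon
  set ε : ℝ := (Real.pi - (y - x)) / 2 with hεdef
  have hε0 : 0 < ε := by simp only [hεdef]; linarith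
  set v : ℝ → ℝ := fun t => Real.sin (t - x + ε) with hvdef
  set v' : ℝ → ℝ := fun t => Real.cos (t - x + ε) with hv'def
  have hv_pos : ∀ t ∈ Set.Icc x y, 0 < v t := by
    intro t ht
    apply Real.sin_pos_of_pos_of_lt_pi
    · have := ht.1; linarith
    · have := ht.2; simp only [hεdef]; linarith
  have hinner : ∀ t : ℝ, HasDerivAt (fun s => s - x + ε) 1 t := by
    intro t
    simpa using (((hasDerivAt_id t).sub_const x).add_const ε)
  have hv : ∀ t : ℝ, HasDerivAt v (v' t) t := by
    intro t
    have := (Real.hasDerivAt_sin (t - x + ε)).comp t (hinner t); rw [mul_one] at this; exact this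
  have hv' : ∀ t : ℝ, HasDerivAt v' (-(v t)) t := by
    intro t
    have := (Real.hasDerivAt_cos (t - x + ε)).comp t (hinner t); rw [mul_one] at this; exact this
  -- g = f - fb and its derivatives at interior points
  have hmem : ∀ t ∈ Set.Ioo x y, Set.Icc x y ∈ nhds t := fun t ht =>
    Icc_mem_nhds ht.1 ht.2
  have hg : ∀ t ∈ Set.Ioo x y,
      HasDerivAt (fun s => f s - fb s) (f' t - fb' t) t := by
    intro t ht
    exact ((hf1 t (Set.Ioo_subset_Icc_self ht)).hasDerivAt (hmem t ht)).sub
      ((hb1 t (Set.Ioo_subset_Icc_self ht)).hasDerivAt (hmem t ht))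
  have hg' : ∀ t ∈ Set.Ioo x y,
      HasDerivAt (fun s => f' s - fb' s) (f'' t - fb'' t) t := by
    intro t ht
    exact ((hf2 t (Set.Ioo_subset_Icc_self ht)).hasDerivAt (hmem t ht)).sub
      ((hb2 t (Set.Ioo_subset_Icc_self ht)).hasDerivAt (hmem t ht))
  -- Wronskian u
  set u : ℝ → ℝ := fun t => (f' t - fb' t) * v t - (f t - fb t) * v' t with hudef
  have hu_deriv : ∀ t ∈ Set.Ioo x y,
      HasDerivAt u (((f'' t - fb'' t) + (f t - fb t)) * v t) t := by
    intro t ht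
    have h1 := ((hg' t ht).mul (hv t)).sub ((hg t ht).mul (hv' t))
    convert h1 using 1
    · rfl
    · rfl
    · rfl
    ring
  -- continuity
  have hcont_g : ContinuousOn (fun s => f s - fb s) (Set.Icc x y) :=
    (fun t ht => ((hf1 t ht).continuousWithinAt).sub ((hb1 t ht).continuousWithinAt))
  have hcont_g' : ContinuousOn (fun s => f' s - fb' s) (Set.Icc x y) :=
    (fun t ht => ((hf2 t ht).continuousWithinAt).sub ((hb2 t ht).continuousWithinAt))
  have hcont_v : Continuous v := by
    apply Real.continuous_sin.comp
    continuity
  have hcont_v' : Continuous v' := by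
    apply Real.continuous_cos.comp
    continuity
  have hcont_u : ContinuousOn u (Set.Icc x y) :=
    (hcont_g'.mul hcont_v.continuousOn).sub (hcont_g.mul hcont_v'.continuousOn)
  -- u is strictly decreasing on [x, y]
  have hu_anti : StrictAntiOn u (Set.Icc x y) := by
    apply strictAntiOn_of_deriv_neg (convex_Icc x y) hcont_u
    intro t ht
    rw [interior_Icc] at ht
    rw [(hu_deriv t ht).deriv]
    have htIcc := Set.Ioo_subset_Icc_self ht
    have h1 := hfineq t htIcc
    have h2 := hbeq t htIcc
    have h3 := hv_pos t htIcc
    have : (f'' t - fb'' t) + (f t - fb t) < 0 := by linarith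
    exact mul_neg_of_neg_of_pos this h3
  -- h = g / v
  set h : ℝ → ℝ := fun t => (f t - fb t) / v t with hhdef
  have hcont_h : ContinuousOn h (Set.Icc x y) :=
    hcont_g.div hcont_v.continuousOn (fun t ht => (hv_pos t ht).ne')
  obtain ⟨t₀, ht₀mem, ht₀min⟩ :=
    (isCompact_Icc).exists_isMinOn (Set.nonempty_Icc.mpr hxy.le) hcont_h
  have hxmem : x ∈ Set.Icc x y := Set.left_mem_Icc.mpr hxy.le
  have hymem : y ∈ Set.Icc x y := Set.right_mem_Icc.mpr hxy.le
  have hhx : h x = 0 := by simp [hhdef, hbx]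
  have hhy : h y = 0 := by simp [hhdef, hby]
  have hht0 : h t₀ < 0 := by
    have h1 : h t₀ ≤ h t₁ := ht₀min ht₁
    have h2 : h t₁ < 0 :=
      div_neg_of_neg_of_pos (by linarith) (hv_pos t₁ ht₁)
    linarith
  have ht₀Ioo : t₀ ∈ Set.Ioo x y := by
    rcases eq_or_lt_of_le ht₀mem.1 with h1 | h1
    · rw [h1] at hhx; linarith
    rcases eq_or_lt_of_le ht₀mem.2 with h2 | h2
    · rw [← h2] at hhy; linarith
    exact ⟨h1, h2⟩
  -- derivative of h at interior points
  have hh_deriv : ∀ t ∈ Set.Ioo x y, HasDerivAt h (u t / (v t) ^ 2) t := by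
    intro t ht
    exact (hg t ht).div (hv t) (hv_pos t (Set.Ioo_subset_Icc_self ht)).ne'
  -- critical point: u t₀ = 0
  have hu0 : u t₀ = 0 := by
    have hloc : IsLocalMin h t₀ := ht₀min.isLocalMin (hmem t₀ ht₀Ioo)
    have := hloc.hasDerivAt_eq_zero (hh_deriv t₀ ht₀Ioo)
    have hvne : (v t₀) ^ 2 ≠ 0 :=
      pow_ne_zero 2 (hv_pos t₀ (Set.Ioo_subset_Icc_self ht₀Ioo)).ne'
    field_simp at this
    exact (div_eq_zero_iff.mp this).resolve_right hvne
  -- h is strictly decreasing on [t₀, y]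
  have hanti : StrictAntiOn h (Set.Icc t₀ y) := by
    apply strictAntiOn_of_deriv_neg (convex_Icc t₀ y)
      (hcont_h.mono (Set.Icc_subset_Icc ht₀Ioo.1.le le_rfl))
    intro t ht
    rw [interior_Icc] at ht
    have htIoo : t ∈ Set.Ioo x y := ⟨lt_trans ht₀Ioo.1 ht.1, ht.2⟩
    rw [(hh_deriv t htIoo).deriv]
    have hut : u t < u t₀ :=
      hu_anti ht₀mem (Set.Ioo_subset_Icc_self htIoo) ht.1
    apply div_neg_of_neg_of_pos (by linarith)
    exact pow_pos (hv_pos t (Set.Ioo_subset_Icc_self htIoo)) 2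
  have : h y < h t₀ :=
    hanti (Set.left_mem_Icc.mpr ht₀Ioo.2.le) (Set.right_mem_Icc.mpr ht₀Ioo.2.le) ht₀Ioo.2
  rw [hhy] at this
  linarith
end

section
/- Let X be a compact metric space and f : X → X a surjective 1-Lipschitz map. Then f is an isometry. -/
/-- A surjective 1-Lipschitz self-map of a compact metric space is an isometry. -/
theorem surjective_oneLipschitz_isometry {X : Type*} [MetricSpace X] [CompactSpace X]
    (f : X → X) (hsurj : Function.Surjective f)
    (hlip : ∀ a b : X, dist (f a) (f b) ≤ dist a b) :
    Isometry f := by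
  -- iterated Lipschitz bound
  have hiter : ∀ (k : ℕ) (u v : X), dist (f^[k] u) (f^[k] v) ≤ dist u v := by
    intro k
    induction k with
    | zero => intro u v; simp
    | succ k ih =>
      intro u v
      rw [Function.iterate_succ_apply, Function.iterate_succ_apply]
      exact (ih (f u) (f v)).trans (hlip u v)
  apply Isometry.of_dist_eq
  intro x y
  refine le_antisymm (hlip x y) ?_
  -- backward orbits
  choose g hg using hsurj
  have hfgm : ∀ (m : ℕ) (z : X), f^[m] (g^[m] z) = z := by
    intro m
    induction m with
    | zero => intro z; simp
    | succ m ih =>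
      intro z
      rw [Function.iterate_succ_apply' g, Function.iterate_succ_apply f, hg]
      exact ih z
  set a : ℕ → X := fun n => g^[n] x with ha
  set b : ℕ → X := fun n => g^[n] y with hb
  have hfa : ∀ (m n : ℕ), f^[m] (a (m + n)) = a n := by
    intro m n
    simp only [ha]
    rw [Function.iterate_add_apply, hfgm]
  have hfb : ∀ (m n : ℕ), f^[m] (b (m + n)) = b n := by
    intro m n
    simp only [hb]
    rw [Function.iterate_add_apply, hfgm]
  refine le_of_forall_pos_le_add ?_
  intro ε hε
  -- extract a convergent subsequence of n ↦ (a n, b n)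
  obtain ⟨p, φ, hφ, hconv⟩ := CompactSpace.tendsto_subseq (fun n => (a n, b n) : ℕ → X × X)
  have hcauchy := hconv.cauchySeq
  rw [Metric.cauchySeq_iff] at hcauchy
  obtain ⟨N, hN⟩ := hcauchy (ε / 2) (by linarith)
  set m := φ N with hm
  set n := φ (N + 1) with hn
  have hmn : m < n := hφ (Nat.lt_succ_self N)
  have hd : dist ((fun n => (a n, b n)) (φ (N+1))) ((fun n => (a n, b n)) (φ N)) < ε / 2 :=
    hN (N + 1) (Nat.le_succ N) N le_rfl
  rw [Prod.dist_eq] at hd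
  have hda : dist (a n) (a m) < ε / 2 := lt_of_le_of_lt (le_max_left _ _) hd
  have hdb : dist (b n) (b m) < ε / 2 := lt_of_le_of_lt (le_max_right _ _) hd
  obtain ⟨k, hk1, hkm⟩ : ∃ k, 1 ≤ k ∧ m + k = n := ⟨n - m, by omega, by omega⟩
  -- dist x (a k) < ε/2 and similarly for b
  have hxm : f^[m] (a m) = x := by simpa [ha] using hfa m 0
  have hym : f^[m] (b m) = y := by simpa [hb] using hfb m 0
  have h0a : dist x (a k) < ε / 2 := by
    have h := hiter m (a n) (a m)
    rw [← hkm, hfa m k, hxm, hkm] at h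
    rw [dist_comm]
    exact h.trans_lt hda
  have h0b : dist y (b k) < ε / 2 := by
    have h := hiter m (b n) (b m)
    rw [← hkm, hfb m k, hym, hkm] at h
    rw [dist_comm]
    exact h.trans_lt hdb
  -- dist x y = dist (f^[k] (a k)) (f^[k] (b k)) ≤ dist (f (a k)) (f (b k))
  have key : dist x y ≤ dist (f (a k)) (f (b k)) := by
    have h1 : f^[k] (a k) = x := by simpa [ha] using hfa k 0
    have h2 : f^[k] (b k) = y := by simpa [hb] using hfb k 0
    obtain ⟨k', hk'⟩ : ∃ k', k = k' + 1 := ⟨k - 1, by omega⟩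
    subst hk'
    rw [Function.iterate_succ_apply] at h1 h2
    calc dist x y = dist (f^[k'] (f (a (k' + 1)))) (f^[k'] (f (b (k' + 1)))) := by
            rw [h1, h2]
      _ ≤ dist (f (a (k' + 1))) (f (b (k' + 1))) := hiter k' _ _
  have h3 : dist (f (a k)) (f (b k)) ≤ dist (f x) (f y) + ε := by
    have t := dist_triangle4 (f (a k)) (f x) (f y) (f (b k))
    have l1 := hlip (a k) x
    have l2 := hlip y (b k)
    have e1 : dist (a k) x = dist x (a k) := dist_comm _ _
    have e2 : dist y (b k) = dist (b k) y := dist_comm _ _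
    linarith [t, l1, l2, e1, h0a, h0b]
  exact key.trans h3
end

section
/- Let V be a finite-dimensional real inner product space and F : V → ℝ concave, positively 1-homogeneous and continuous. Then there exists a unique vector h ∈ V (the gradient) such that F(h) = |h|² and F(v) ≤ ⟨h, v⟩ for every v ∈ V. -/
/-- Existence and uniqueness of the gradient of a concave, positively 1-homogeneous,
continuous function on a finite-dimensional inner ℝ product space. -/
theorem gradient_exists_unique {V : Type*} [NormedAddCommGroup V]
    [InnerProductSpace ℝ V] [FiniteDimensional ℝ V]
    (F : V → ℝ) (hconc : ConcaveOn ℝ Set.univ F)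
    (hhom : ∀ c : ℝ, 0 ≤ c → ∀ v : V, F (c • v) = c * F v)
    (hcont : Continuous F) :
    ∃! h : V, F h = ‖h‖ ^ 2 ∧ ∀ v : V, F v ≤ (inner ℝ h v : ℝ) := by
  have F0 : F 0 = 0 := by
    have := hhom 0 le_rfl 0
    simpa using this
  have uniq : ∀ h₁ h₂ : V, (F h₁ = ‖h₁‖ ^ 2 ∧ ∀ v : V, F v ≤ (inner ℝ h₁ v : ℝ)) →
      (F h₂ = ‖h₂‖ ^ 2 ∧ ∀ v : V, F v ≤ (inner ℝ h₂ v : ℝ)) → h₁ = h₂ := by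
    rintro h₁ h₂ ⟨e1, l1⟩ ⟨e2, l2⟩
    have a1 : (‖h₁‖ : ℝ) ^ 2 ≤ inner ℝ h₂ h₁ := e1 ▸ l2 h₁
    have a2 : (‖h₂‖ : ℝ) ^ 2 ≤ inner ℝ h₁ h₂ := e2 ▸ l1 h₂
    have hcomm : (inner ℝ h₁ h₂ : ℝ) = inner ℝ h₂ h₁ := real_inner_comm _ _
    have hsq : ‖h₁ - h₂‖ ^ 2 ≤ 0 := by
      rw [norm_sub_sq_real]
      nlinarith
    have hn : ‖h₁ - h₂‖ = 0 := by
      have := sq_nonneg ‖h₁ - h₂‖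
      nlinarith
    have : h₁ - h₂ = 0 := norm_eq_zero.mp hn
    exact sub_eq_zero.mp this
  suffices hex : ∃ h : V, F h = ‖h‖ ^ 2 ∧ ∀ v : V, F v ≤ (inner ℝ h v : ℝ) by
    obtain ⟨h, hh⟩ := hex
    exact ⟨h, hh, fun h' hh' => uniq h' h hh' hh⟩
  rcases subsingleton_or_nontrivial V with hV | hV
  · refine ⟨0, by simpa using F0, fun v => ?_⟩
    have hv : v = 0 := Subsingleton.elim _ _
    simp [hv, F0]
  · obtain ⟨u, hu, hmax⟩ := (isCompact_sphere (0 : V) 1).exists_isMaxOn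
      (NormedSpace.sphere_nonempty.mpr zero_le_one) hcont.continuousOn
    have hu1 : ‖u‖ = 1 := mem_sphere_zero_iff_norm.mp hu
    set S := F u with hS
    have hnormF : ∀ w : V, w ≠ 0 → F w = ‖w‖ * F (‖w‖⁻¹ • w) := by
      intro w hw
      have h1 : ‖w‖ ≠ 0 := norm_ne_zero_iff.mpr hw
      have := hhom ‖w‖ (norm_nonneg w) (‖w‖⁻¹ • w)
      rwa [smul_smul, mul_inv_cancel₀ h1, one_smul] at this
    have hsph : ∀ w : V, w ≠ 0 → F (‖w‖⁻¹ • w) ≤ S := by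
      intro w hw
      apply hmax
      have h1 : ‖w‖ ≠ 0 := norm_ne_zero_iff.mpr hw
      simp [mem_sphere_zero_iff_norm, norm_smul, abs_of_nonneg (norm_nonneg w),
        inv_mul_cancel₀ h1]
    rcases le_or_gt S 0 with hSle | hSpos
    · -- gradient is 0
      refine ⟨0, by simpa using F0, fun v => ?_⟩
      rcases eq_or_ne v 0 with rfl | hv
      · simp [F0]
      · have := hsph v hv
        have h2 := hnormF v hv
        have h3 : F v ≤ ‖v‖ * S :=
          h2 ▸ mul_le_mul_of_nonneg_left this (norm_nonneg v)
        have : F v ≤ 0 := le_trans h3 (mul_nonpos_of_nonneg_of_nonpos (norm_nonneg v) hSle)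
        simpa using this
    · -- gradient is S • u
      have hbound : ∀ w : V, F w ≤ S * ‖w‖ := by
        intro w
        rcases eq_or_ne w 0 with rfl | hw
        · simp [F0]
        · have h2 := hnormF w hw
          have h3 := hsph w hw
          calc F w = ‖w‖ * F (‖w‖⁻¹ • w) := h2
            _ ≤ ‖w‖ * S := mul_le_mul_of_nonneg_left h3 (norm_nonneg w)
            _ = S * ‖w‖ := mul_comm _ _
      have superadd : ∀ a b : V, F a + F b ≤ F (a + b) := by
        intro a b
        have hc := hconc.2 (Set.mem_univ a) (Set.mem_univ b)
          (by norm_num : (0:ℝ) ≤ 1/2) (by norm_num : (0:ℝ) ≤ 1/2) (by norm_num)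
        simp only [smul_eq_mul] at hc
        have h2 := hhom 2 (by norm_num) ((1/2 : ℝ) • a + (1/2 : ℝ) • b)
        have heq : (2 : ℝ) • ((1/2 : ℝ) • a + (1/2 : ℝ) • b) = a + b := by
          rw [smul_add, smul_smul, smul_smul]
          norm_num
        rw [heq] at h2
        linarith
      refine ⟨S • u, ?_, fun v => ?_⟩
      · have h1 : F (S • u) = S * F u := hhom S hSpos.le u
        have h2 : ‖S • u‖ = S := by
          rw [norm_smul, hu1, mul_one, Real.norm_eq_abs, abs_of_pos hSpos]
        rw [h1, h2, ← hS]
        ring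
      · -- main inequality
        have key : ∀ t : ℝ, 0 < t →
            F v ≤ S * (2 * (inner ℝ u v : ℝ) + t * ‖v‖ ^ 2) / (‖u + t • v‖ + 1) := by
          intro t ht
          have hsup := superadd u (t • v)
          have htF : F (t • v) = t * F v := hhom t ht.le v
          have hb := hbound (u + t • v)
          have hd : (0 : ℝ) < ‖u + t • v‖ + 1 := by positivity
          have hnsq : ‖u + t • v‖ ^ 2 = 1 + 2 * t * (inner ℝ u v : ℝ) + t ^ 2 * ‖v‖ ^ 2 := by
            rw [norm_add_sq_real, real_inner_smul_right, norm_smul, hu1,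
              Real.norm_eq_abs, abs_of_pos ht]
            ring
          -- S + t * F v ≤ S * ‖u + t • v‖
          have h1 : S + t * F v ≤ S * ‖u + t • v‖ := by
            rw [htF] at hsup; linarith
          have h3 : (‖u + t • v‖ - 1) * (‖u + t • v‖ + 1) =
              t * (2 * (inner ℝ u v : ℝ) + t * ‖v‖ ^ 2) := by
            nlinarith [hnsq]
          have h4 : ‖u + t • v‖ - 1 =
              t * (2 * (inner ℝ u v : ℝ) + t * ‖v‖ ^ 2) / (‖u + t • v‖ + 1) := by
            field_simp
            linarith [h3]
          have h2 : t * F v ≤ S * (t * (2 * (inner ℝ u v : ℝ) + t * ‖v‖ ^ 2) / (‖u + t • v‖ + 1)) := by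
            rw [← h4]; linarith
          have h5 : S * (t * (2 * (inner ℝ u v : ℝ) + t * ‖v‖ ^ 2) / (‖u + t • v‖ + 1)) =
              t * (S * (2 * (inner ℝ u v : ℝ) + t * ‖v‖ ^ 2) / (‖u + t • v‖ + 1)) := by
            ring
          rw [h5] at h2
          exact le_of_mul_le_mul_left h2 ht
        -- take the limit t → 0⁺
        have hden : (fun t : ℝ => ‖u + t • v‖ + 1) 0 ≠ 0 := by
          simp [hu1]
        have hφ : ContinuousAt
            (fun t : ℝ => S * (2 * (inner ℝ u v : ℝ) + t * ‖v‖ ^ 2) / (‖u + t • v‖ + 1)) 0 := by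
          apply ContinuousAt.div
          · fun_prop
          · fun_prop
          · simpa using hden
        have hval : S * (2 * (inner ℝ u v : ℝ) + (0:ℝ) * ‖v‖ ^ 2) / (‖u + (0:ℝ) • v‖ + 1)
            = (inner ℝ (S • u) v : ℝ) := by
          rw [real_inner_smul_left]
          simp [hu1]
          ring
        have htend : Filter.Tendsto
            (fun t : ℝ => S * (2 * (inner ℝ u v : ℝ) + t * ‖v‖ ^ 2) / (‖u + t • v‖ + 1))
            (nhdsWithin 0 (Set.Ioi 0)) (nhds ((inner ℝ (S • u) v : ℝ))) := by
          rw [← hval]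
          exact hφ.tendsto.mono_left nhdsWithin_le_nhds
        exact ge_of_tendsto htend (eventually_nhdsWithin_of_forall (fun t ht => key t ht))
end

section
/- A geodesic metric space satisfying the Toponogov angle comparison for some κ (an Alexandrov space of curvature ≥ κ) is non-branching: if two unit-speed geodesics γ₁, γ₂ : [0, 1] → X agree on [0, t₁] for some 0 < t₁ < 1, then γ₁ = γ₂ on all of [0, 1]. -/
/-- The comparison angle `∠̃^κ` of a triangle with opposite side `a` and adjacent
sides `b`, `c`, computed via the cosine law in the model space `M²_κ`. -/
noncomputable def cmpAngle (κ a b c : ℝ) : ℝ :=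
  if κ = 0 then Real.arccos ((b ^ 2 + c ^ 2 - a ^ 2) / (2 * b * c))
  else Real.arccos ((csK κ a - csK κ b * csK κ c) / (κ * snK κ b * snK κ c))

lemma cmpAngle_nonneg (κ a b c : ℝ) : 0 ≤ cmpAngle κ a b c := by
  unfold cmpAngle; split <;> exact Real.arccos_nonneg _

lemma cmpAngle_straight (κ b c : ℝ) (hb : snK κ b ≠ 0) (hc : snK κ c ≠ 0) :
    cmpAngle κ (b + c) b c = Real.pi := by
  rcases lt_trichotomy κ 0 with hκ | hκ | hκ
  · have hns : ¬ (0:ℝ) < κ := not_lt.mpr hκ.le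
    simp only [snK, if_neg hns, if_pos hκ] at hb hc
    simp only [cmpAngle, csK, snK, if_neg hns, if_pos hκ, if_neg (ne_of_lt hκ)]
    have hw : Real.sqrt (-κ) ^ 2 = -κ := Real.sq_sqrt (by linarith)
    have hw0 : (0:ℝ) < Real.sqrt (-κ) := Real.sqrt_pos.mpr (by linarith)
    have hsb : Real.sinh (Real.sqrt (-κ) * b) ≠ 0 := fun h => hb (by rw [h]; simp)
    have hsc : Real.sinh (Real.sqrt (-κ) * c) ≠ 0 := fun h => hc (by rw [h]; simp)
    have hD : κ * (Real.sinh (Real.sqrt (-κ) * b) / Real.sqrt (-κ)) *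
        (Real.sinh (Real.sqrt (-κ) * c) / Real.sqrt (-κ)) =
        -(Real.sinh (Real.sqrt (-κ) * b) * Real.sinh (Real.sqrt (-κ) * c)) := by
      field_simp
      linear_combination hw
    rw [hD]
    have key : (Real.cosh (Real.sqrt (-κ) * (b + c)) -
        Real.cosh (Real.sqrt (-κ) * b) * Real.cosh (Real.sqrt (-κ) * c)) /
        -(Real.sinh (Real.sqrt (-κ) * b) * Real.sinh (Real.sqrt (-κ) * c)) = -1 := by
      rw [div_eq_iff (by simp [hsb, hsc]), mul_add, Real.cosh_add]; ring
    rw [key, Real.arccos_neg_one]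
  · subst hκ
    simp only [snK, if_neg (lt_irrefl (0:ℝ))] at hb hc
    simp only [cmpAngle, eq_self_iff_true, if_true]
    have key : ((b ^ 2 + c ^ 2 - (b + c) ^ 2) / (2 * b * c)) = -1 := by
      field_simp; ring
    rw [key, Real.arccos_neg_one]
  · simp only [snK, if_pos hκ] at hb hc
    simp only [cmpAngle, csK, snK, if_pos hκ, if_neg (ne_of_gt hκ)]
    have hw : Real.sqrt κ ^ 2 = κ := Real.sq_sqrt hκ.le
    have hw0 : (0:ℝ) < Real.sqrt κ := Real.sqrt_pos.mpr hκ
    have hsb : Real.sin (Real.sqrt κ * b) ≠ 0 := fun h => hb (by rw [h]; simp)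
    have hsc : Real.sin (Real.sqrt κ * c) ≠ 0 := fun h => hc (by rw [h]; simp)
    have hD : κ * (Real.sin (Real.sqrt κ * b) / Real.sqrt κ) *
        (Real.sin (Real.sqrt κ * c) / Real.sqrt κ) =
        Real.sin (Real.sqrt κ * b) * Real.sin (Real.sqrt κ * c) := by
      field_simp
      linear_combination -hw
    rw [hD]
    have key : (Real.cos (Real.sqrt κ * (b + c)) -
        Real.cos (Real.sqrt κ * b) * Real.cos (Real.sqrt κ * c)) /
        (Real.sin (Real.sqrt κ * b) * Real.sin (Real.sqrt κ * c)) = -1 := by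
      rw [div_eq_iff (by simp [hsb, hsc]), mul_add, Real.cos_add]; ring
    rw [key, Real.arccos_neg_one]

lemma cmpAngle_zero (κ d e : ℝ) (hd : 0 ≤ d) (he : snK κ e ≠ 0)
    (hκd : 0 < κ → Real.sqrt κ * d < 2 * Real.pi)
    (h : cmpAngle κ d e e ≤ 0) : d = 0 := by
  have h0 : cmpAngle κ d e e = 0 := le_antisymm h (cmpAngle_nonneg κ d e e)
  rcases lt_trichotomy κ 0 with hκ | hκ | hκ
  · have hns : ¬ (0:ℝ) < κ := not_lt.mpr hκ.le
    simp only [snK, if_neg hns, if_pos hκ] at he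
    simp only [cmpAngle, csK, snK, if_neg hns, if_pos hκ, if_neg (ne_of_lt hκ)] at h0
    rw [Real.arccos_eq_zero] at h0
    have hw : Real.sqrt (-κ) ^ 2 = -κ := Real.sq_sqrt (by linarith)
    have hw0 : (0:ℝ) < Real.sqrt (-κ) := Real.sqrt_pos.mpr (by linarith)
    have hse : Real.sinh (Real.sqrt (-κ) * e) ≠ 0 := fun hh => he (by rw [hh]; simp)
    set u := Real.sinh (Real.sqrt (-κ) * e) with hu
    have hD : κ * (u / Real.sqrt (-κ)) * (u / Real.sqrt (-κ)) = -(u ^ 2) := by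
      field_simp
      linear_combination hw
    rw [hD] at h0
    have hDneg : -(u ^ 2) < 0 := by
      have h1 : 0 < u ^ 2 := lt_of_le_of_ne (sq_nonneg u) (fun hh => hse (by nlinarith))
      linarith
    rw [le_div_iff_of_neg hDneg] at h0
    have hch : Real.cosh (Real.sqrt (-κ) * d) ≤ 1 := by
      have hc2 : Real.cosh (Real.sqrt (-κ) * e) ^ 2 = u ^ 2 + 1 := Real.cosh_sq _
      nlinarith
    have h2 : Real.sqrt (-κ) * d = 0 := by
      by_contra hne
      exact absurd (Real.one_lt_cosh.mpr hne) (not_lt.mpr hch)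
    rcases mul_eq_zero.mp h2 with h3 | h3
    · linarith
    · exact h3
  · subst hκ
    simp only [snK, if_neg (lt_irrefl (0:ℝ))] at he
    simp only [cmpAngle, eq_self_iff_true, if_true] at h0
    rw [Real.arccos_eq_zero] at h0
    have he2 : 0 < 2 * e * e := by
      rcases lt_trichotomy e 0 with h3 | h3 | h3
      · nlinarith
      · exact absurd h3 he
      · nlinarith
    rw [le_div_iff₀ he2] at h0
    nlinarith
  · simp only [snK, if_pos hκ] at he
    simp only [cmpAngle, csK, snK, if_pos hκ, if_neg (ne_of_gt hκ)] at h0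
    rw [Real.arccos_eq_zero] at h0
    have hw : Real.sqrt κ ^ 2 = κ := Real.sq_sqrt hκ.le
    have hw0 : (0:ℝ) < Real.sqrt κ := Real.sqrt_pos.mpr hκ
    have hse : Real.sin (Real.sqrt κ * e) ≠ 0 := fun hh => he (by rw [hh]; simp)
    set u := Real.sin (Real.sqrt κ * e) with hu
    have hD : κ * (u / Real.sqrt κ) * (u / Real.sqrt κ) = u ^ 2 := by
      field_simp
      linear_combination -hw
    rw [hD] at h0
    have hDpos : 0 < u ^ 2 := lt_of_le_of_ne (sq_nonneg u) (fun hh => hse (by nlinarith))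
    rw [le_div_iff₀ hDpos] at h0
    have hc1 : Real.cos (Real.sqrt κ * d) = 1 := by
      have hpy : Real.sin (Real.sqrt κ * e) ^ 2 + Real.cos (Real.sqrt κ * e) ^ 2 = 1 :=
        Real.sin_sq_add_cos_sq _
      have : 1 ≤ Real.cos (Real.sqrt κ * d) := by nlinarith
      exact le_antisymm (Real.cos_le_one _) this
    have h2 : Real.sqrt κ * d = 0 := by
      rw [Real.cos_eq_one_iff_of_lt_of_lt
        (by nlinarith [Real.pi_pos, mul_nonneg hw0.le hd]) (hκd hκ)] at hc1
      exact hc1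
    rcases mul_eq_zero.mp h2 with h3 | h3
    · linarith
    · exact h3


noncomputable def epsK (κ : ℝ) : ℝ := if 0 < κ then Real.pi / (2 * Real.sqrt κ) else 1

lemma epsK_pos (κ : ℝ) : 0 < epsK κ := by
  unfold epsK; split
  · have := Real.pi_pos
    have : (0:ℝ) < Real.sqrt κ := Real.sqrt_pos.mpr (by assumption)
    positivity
  · exact one_pos

lemma snK_ne_zero_of_small (κ c : ℝ) (hc : 0 < c) (hce : c ≤ epsK κ) : snK κ c ≠ 0 := by
  unfold snK epsK at *
  rcases lt_trichotomy κ 0 with hκ | hκ | hκ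
  · have hns : ¬ (0:ℝ) < κ := not_lt.mpr hκ.le
    simp only [if_neg hns, if_pos hκ] at *
    have hw0 : (0:ℝ) < Real.sqrt (-κ) := Real.sqrt_pos.mpr (by linarith)
    have : 0 < Real.sinh (Real.sqrt (-κ) * c) := by
      rw [Real.sinh_pos_iff]; positivity
    positivity
  · subst hκ
    simp only [if_neg (lt_irrefl (0:ℝ))]
    exact ne_of_gt hc
  · simp only [if_pos hκ] at *
    have hw0 : (0:ℝ) < Real.sqrt κ := Real.sqrt_pos.mpr hκ
    have h1 : 0 < Real.sqrt κ * c := by positivity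
    have h2 : Real.sqrt κ * c < Real.pi := by
      have : Real.sqrt κ * c ≤ Real.sqrt κ * (Real.pi / (2 * Real.sqrt κ)) :=
        mul_le_mul_of_nonneg_left hce hw0.le
      have h3 : Real.sqrt κ * (Real.pi / (2 * Real.sqrt κ)) = Real.pi / 2 := by
        field_simp
      rw [h3] at this
      linarith [Real.pi_pos]
    have : 0 < Real.sin (Real.sqrt κ * c) := Real.sin_pos_of_pos_of_lt_pi h1 h2
    positivity

lemma sqrt_mul_lt_two_pi (κ d : ℝ) (hκ : 0 < κ) (hd0 : 0 ≤ d) (hd : d ≤ 2 * epsK κ) :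
    Real.sqrt κ * d < 2 * Real.pi := by
  unfold epsK at hd
  rw [if_pos hκ] at hd
  have hw0 : (0:ℝ) < Real.sqrt κ := Real.sqrt_pos.mpr hκ
  have h1 : Real.sqrt κ * d ≤ Real.sqrt κ * (2 * (Real.pi / (2 * Real.sqrt κ))) :=
    mul_le_mul_of_nonneg_left hd hw0.le
  have h2 : Real.sqrt κ * (2 * (Real.pi / (2 * Real.sqrt κ))) = Real.pi := by
    field_simp
  rw [h2] at h1
  linarith [Real.pi_pos]

/-- An Alexandrov space of curvature `≥ κ` (a complete geodesic space satisfying the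
Toponogov comparison, here in its four-point form) is non-branching: two unit-speed
geodesics `γ₁, γ₂ : [0,1] → X` that agree on `[0, t₁]` for some `0 < t₁ < 1` agree
on all of `[0, 1]`. -/
theorem alexandrov_nonbranching {X : Type*} [MetricSpace X] [CompleteSpace X] (κ : ℝ)
    (hgeo : ∀ x y : X, ∃ m : X, dist x m = dist x y / 2 ∧ dist m y = dist x y / 2)
    (hAlex : ∀ p a b c : X,
      cmpAngle κ (dist a b) (dist p a) (dist p b) +
      cmpAngle κ (dist b c) (dist p b) (dist p c) +
      cmpAngle κ (dist c a) (dist p c) (dist p a) ≤ 2 * Real.pi)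
    (γ₁ γ₂ : ℝ → X)
    (h₁ : ∀ s ∈ Set.Icc (0:ℝ) 1, ∀ t ∈ Set.Icc (0:ℝ) 1, dist (γ₁ s) (γ₁ t) = |s - t|)
    (h₂ : ∀ s ∈ Set.Icc (0:ℝ) 1, ∀ t ∈ Set.Icc (0:ℝ) 1, dist (γ₂ s) (γ₂ t) = |s - t|)
    (t₁ : ℝ) (ht₁ : 0 < t₁) (ht₁' : t₁ < 1)
    (hagree : ∀ t ∈ Set.Icc (0:ℝ) t₁, γ₁ t = γ₂ t) :
    ∀ t ∈ Set.Icc (0:ℝ) 1, γ₁ t = γ₂ t := by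
  have hεpos := epsK_pos κ
  -- Local extension step
  have hstep : ∀ T : ℝ, t₁ ≤ T → T < 1 → (∀ u ∈ Set.Icc (0:ℝ) T, γ₁ u = γ₂ u) →
      ∀ t : ℝ, T < t → t ≤ 1 → t - T ≤ epsK κ → γ₁ t = γ₂ t := by
    intro T ht₁T hT1 hT t hTt ht1 htε
    set δ := min T (epsK κ) with hδdef
    have hδpos : 0 < δ := lt_min (lt_of_lt_of_le ht₁ ht₁T) hεpos
    have hδT : δ ≤ T := min_le_left _ _
    have hδε : δ ≤ epsK κ := min_le_right _ _
    set r := T - δ with hrdef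
    have hr0 : 0 ≤ r := by simp only [hrdef]; linarith
    have hrT : r ≤ T := by simp only [hrdef]; linarith
    have hT0 : 0 ≤ T := le_trans ht₁.le ht₁T
    have ht0 : (0:ℝ) ≤ t := by linarith
    have hmr : r ∈ Set.Icc (0:ℝ) 1 := ⟨hr0, by linarith⟩
    have hmT : T ∈ Set.Icc (0:ℝ) 1 := ⟨hT0, hT1.le⟩
    have hmt : t ∈ Set.Icc (0:ℝ) 1 := ⟨ht0, ht1⟩
    have hr12 : γ₁ r = γ₂ r := hT r ⟨hr0, hrT⟩
    have hT12 : γ₁ T = γ₂ T := hT T ⟨hT0, le_refl T⟩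
    -- distances
    have d_pa : dist (γ₁ T) (γ₁ r) = δ := by
      rw [h₁ T hmT r hmr, hrdef]; rw [abs_of_nonneg (by linarith)]; ring
    have d_pb : dist (γ₁ T) (γ₁ t) = t - T := by
      rw [h₁ T hmT t hmt, abs_of_nonpos (by linarith)]; ring
    have d_pc : dist (γ₁ T) (γ₂ t) = t - T := by
      rw [hT12, h₂ T hmT t hmt, abs_of_nonpos (by linarith)]; ring
    have d_ab : dist (γ₁ r) (γ₁ t) = δ + (t - T) := by
      rw [h₁ r hmr t hmt, hrdef, abs_of_nonpos (by linarith)]; ring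
    have d_ca : dist (γ₂ t) (γ₁ r) = (t - T) + δ := by
      rw [hr12, dist_comm, h₂ r hmr t hmt, hrdef, abs_of_nonpos (by linarith)]; ring
    have hsnδ : snK κ δ ≠ 0 := snK_ne_zero_of_small κ δ hδpos hδε
    have hsne : snK κ (t - T) ≠ 0 := snK_ne_zero_of_small κ (t - T) (by linarith) htε
    have hA := hAlex (γ₁ T) (γ₁ r) (γ₁ t) (γ₂ t)
    rw [d_pa, d_pb, d_pc, d_ab, d_ca] at hA
    rw [cmpAngle_straight κ δ (t - T) hsnδ hsne] at hA
    rw [cmpAngle_straight κ (t - T) δ hsne hsnδ] at hA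
    have hmid : cmpAngle κ (dist (γ₁ t) (γ₂ t)) (t - T) (t - T) ≤ 0 := by linarith
    have hdd : dist (γ₁ t) (γ₂ t) ≤ 2 * (t - T) := by
      calc dist (γ₁ t) (γ₂ t) ≤ dist (γ₁ t) (γ₁ T) + dist (γ₁ T) (γ₂ t) := dist_triangle _ _ _
        _ = (t - T) + (t - T) := by rw [dist_comm (γ₁ t) (γ₁ T), d_pb, d_pc]
        _ = 2 * (t - T) := by ring
    have := cmpAngle_zero κ (dist (γ₁ t) (γ₂ t)) (t - T) dist_nonneg hsne
      (fun hκ => sqrt_mul_lt_two_pi κ _ hκ dist_nonneg (by linarith)) hmid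
    exact eq_of_dist_eq_zero this
  -- the supremum of agreement
  set S := {s : ℝ | s ∈ Set.Icc t₁ 1 ∧ ∀ u ∈ Set.Icc (0:ℝ) s, γ₁ u = γ₂ u} with hSdef
  have hSne : t₁ ∈ S := ⟨⟨le_refl t₁, ht₁'.le⟩, hagree⟩
  have hbdd : BddAbove S := ⟨1, fun s hs => hs.1.2⟩
  set T := sSup S with hTdef
  have ht₁T : t₁ ≤ T := le_csSup hbdd hSne
  have hT1 : T ≤ 1 := csSup_le ⟨t₁, hSne⟩ (fun s hs => hs.1.2)
  have hT0 : 0 ≤ T := le_trans ht₁.le ht₁T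
  have hbelow : ∀ u, 0 ≤ u → u < T → γ₁ u = γ₂ u := by
    intro u hu0 huT
    obtain ⟨s, hsS, hus⟩ := exists_lt_of_lt_csSup ⟨t₁, hSne⟩ huT
    exact hsS.2 u ⟨hu0, hus.le⟩
  have hTag : ∀ u ∈ Set.Icc (0:ℝ) T, γ₁ u = γ₂ u := by
    intro u hu
    rcases lt_or_eq_of_le hu.2 with huT | huT
    · exact hbelow u hu.1 huT
    · rcases eq_or_lt_of_le ht₁T with he | he
      · exact hagree u ⟨hu.1, le_of_eq (huT.trans he.symm)⟩
      · have htu : t₁ < u := huT ▸ he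
        apply eq_of_dist_eq_zero
        apply le_antisymm _ dist_nonneg
        apply le_of_forall_pos_le_add
        intro e he'
        set u₀ := max t₁ (u - e / 2) with hu₀def
        have hu₀u : u₀ < u := max_lt htu (by linarith)
        have hu₀0 : 0 ≤ u₀ := le_trans ht₁.le (le_max_left _ _)
        have hu₀eq : γ₁ u₀ = γ₂ u₀ := hbelow u₀ hu₀0 (huT ▸ hu₀u)
        have hmu : u ∈ Set.Icc (0:ℝ) 1 := ⟨hu.1, le_trans hu.2 hT1⟩
        have hmu₀ : u₀ ∈ Set.Icc (0:ℝ) 1 := ⟨hu₀0, by linarith [hmu.2]⟩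
        have hue : u - u₀ ≤ e / 2 := by
          have : u - e / 2 ≤ u₀ := le_max_right _ _
          linarith
        calc dist (γ₁ u) (γ₂ u)
            ≤ dist (γ₁ u) (γ₁ u₀) + dist (γ₁ u₀) (γ₂ u) := dist_triangle _ _ _
          _ = dist (γ₁ u) (γ₁ u₀) + dist (γ₂ u₀) (γ₂ u) := by rw [hu₀eq]
          _ = |u - u₀| + |u₀ - u| := by rw [h₁ u hmu u₀ hmu₀, h₂ u₀ hmu₀ u hmu]
          _ = (u - u₀) + (u - u₀) := by
              rw [abs_of_nonneg (by linarith), abs_of_nonpos (by linarith)]; ring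
          _ ≤ 0 + e := by linarith
  have hTeq : T = 1 := by
    by_contra hne
    have hTlt : T < 1 := lt_of_le_of_ne hT1 hne
    have hs'S : min 1 (T + epsK κ) ∈ S := by
      constructor
      · exact ⟨le_min (by linarith) (by linarith), min_le_left _ _⟩
      · intro u hu
        rcases le_or_gt u T with huT | huT
        · exact hTag u ⟨hu.1, huT⟩
        · refine hstep T ht₁T hTlt hTag u huT (le_trans hu.2 (min_le_left _ _)) ?_
          have : u ≤ T + epsK κ := le_trans hu.2 (min_le_right _ _)
          linarith
    have : min 1 (T + epsK κ) ≤ T := le_csSup hbdd hs'S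
    have : T < min 1 (T + epsK κ) := lt_min hTlt (by linarith)
    linarith
  intro t ht
  exact hTag t ⟨ht.1, hTeq ▸ ht.2⟩
end
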